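/- Let z ∈ ℂ be neither zero nor a negative real number (i.e. z ∉ (−∞, 0]). Then the map φ(w) = 2·w^{3/8}·(w̄)^{−1/8} − 1, defined using the principal branch of the complex power, is real-differentiable at z, its Jacobian determinant at z equals 1/(2·|z|^{3/2}), and its Beltrami coefficient at z equals μ(z) = −(1/3)·z/z̄; in particular |μ(z)| = 1/3. -/

import Mathlib

noncomputable section

lemma stmt15_det_helper (a b : ℂ) :
    LinearMap.det (((a • (1 : ℂ →L[ℝ] ℂ) + b • (Complex.conjCLE : ℂ →L[ℝ] ℂ)) : ℂ →L[ℝ] ℂ) :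
      ℂ →ₗ[ℝ] ℂ) = ‖a‖ ^ 2 - ‖b‖ ^ 2 := by
  rw [← LinearMap.det_toMatrix Complex.basisOneI, Matrix.det_fin_two]
  simp [LinearMap.toMatrix_apply, Complex.sq_norm, Complex.normSq_apply]
  ring

lemma stmt15_fderiv (z : ℂ) (hz : z ∈ Complex.slitPlane) :
    HasFDerivAt (fun w : ℂ =>
      2 * w ^ ((3 : ℂ) / 8) * (starRingEnd ℂ w) ^ ((-1 : ℂ) / 8) - 1)
      ((((3:ℂ)/4 * z ^ ((3:ℂ)/8 - 1) * (starRingEnd ℂ z) ^ ((-1:ℂ)/8)) • (1 : ℂ →L[ℝ] ℂ)) +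
        ((-(1:ℂ)/4 * z ^ ((3:ℂ)/8) * (starRingEnd ℂ z) ^ ((-1:ℂ)/8 - 1)) •
          (Complex.conjCLE : ℂ →L[ℝ] ℂ))) z := by
  have hzc : (starRingEnd ℂ z) ∈ Complex.slitPlane := by
    rw [Complex.mem_slitPlane_iff] at hz ⊢
    simpa using hz
  have hf : HasFDerivAt (fun w : ℂ => w ^ ((3:ℂ)/8))
      ((((3:ℂ)/8 * z ^ ((3:ℂ)/8 - 1))) • (1 : ℂ →L[ℝ] ℂ)) z := by
    have := (Complex.hasStrictDerivAt_cpow_const (c := (3:ℂ)/8) hz).hasDerivAt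
    have := this.hasFDerivAt.restrictScalars ℝ
    refine this.congr_fderiv ?_
    ext v
    simp [mul_comm]
  have hconj : HasFDerivAt (fun w : ℂ => starRingEnd ℂ w)
      (Complex.conjCLE : ℂ →L[ℝ] ℂ) z :=
    Complex.conjCLE.toContinuousLinearMap.hasFDerivAt
  have hg : HasFDerivAt (fun w : ℂ => (starRingEnd ℂ w) ^ ((-1:ℂ)/8))
      ((((-1:ℂ)/8 * (starRingEnd ℂ z) ^ ((-1:ℂ)/8 - 1))) • (Complex.conjCLE : ℂ →L[ℝ] ℂ)) z := by
    have h1 := (Complex.hasStrictDerivAt_cpow_const (c := (-1:ℂ)/8) hzc).hasDerivAt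
    have h2 := (h1.hasFDerivAt.restrictScalars ℝ).comp z hconj
    refine h2.congr_fderiv ?_
    ext v
    simp [mul_comm]
  have h := ((hf.const_mul (2:ℂ)).mul hg).sub_const 1
  refine h.congr_fderiv ?_
  ext v
  simp
  ring

/-- the map `φ(w) = 2·w^{3/8}·(w̄)^{−1/8} − 1` (principal branch) is
real-differentiable at every `z` off the closed negative real axis, with Jacobian determinant
`1/(2|z|^{3/2})` and Beltrami coefficient `μ(z) = −(1/3)·z/z̄`, whence `|μ(z)| = 1/3`. -/
theorem stmt15 (z : ℂ) (hz : ¬(z.im = 0 ∧ z.re ≤ 0)) :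
    let φ : ℂ → ℂ := fun w =>
      2 * w ^ ((3 : ℂ) / 8) * (starRingEnd ℂ w) ^ ((-1 : ℂ) / 8) - 1
    DifferentiableAt ℝ φ z ∧
    LinearMap.det ((fderiv ℝ φ z : ℂ →L[ℝ] ℂ) : ℂ →ₗ[ℝ] ℂ) =
      1 / (2 * ‖z‖ ^ ((3 : ℝ) / 2)) ∧
    ((fderiv ℝ φ z 1 + Complex.I * fderiv ℝ φ z Complex.I) / 2) /
        ((fderiv ℝ φ z 1 - Complex.I * fderiv ℝ φ z Complex.I) / 2) =
      -(1 / 3) * (z / starRingEnd ℂ z) ∧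
    ‖(-(1 / 3 : ℂ) * (z / starRingEnd ℂ z))‖ = 1 / 3 := by
  intro φ
  have hzs : z ∈ Complex.slitPlane := by
    rw [Complex.mem_slitPlane_iff]
    by_contra h
    push_neg at h
    exact hz ⟨h.2, h.1⟩
  have hz0 : z ≠ 0 := Complex.slitPlane_ne_zero hzs
  have hzc0 : starRingEnd ℂ z ≠ 0 := by simpa using hz0
  set a : ℂ := (3:ℂ)/4 * z ^ ((3:ℂ)/8 - 1) * (starRingEnd ℂ z) ^ ((-1:ℂ)/8) with ha
  set b : ℂ := -(1:ℂ)/4 * z ^ ((3:ℂ)/8) * (starRingEnd ℂ z) ^ ((-1:ℂ)/8 - 1) with hb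
  have hL := stmt15_fderiv z hzs
  have hdiff : DifferentiableAt ℝ φ z := hL.differentiableAt
  have hfd : fderiv ℝ φ z = a • (1 : ℂ →L[ℝ] ℂ) + b • (Complex.conjCLE : ℂ →L[ℝ] ℂ) :=
    hL.fderiv
  have hv1 : fderiv ℝ φ z 1 = a + b := by
    rw [hfd]; simp
  have hvI : fderiv ℝ φ z Complex.I = a * Complex.I - b * Complex.I := by
    rw [hfd]; simp [Complex.conjCLE_apply, mul_comm]
    ring
  have hz38 : z ^ ((3:ℂ)/8 - 1) ≠ 0 := by
    simp [Complex.cpow_eq_zero_iff, hz0]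
  have hzc18 : (starRingEnd ℂ z) ^ ((-1:ℂ)/8) ≠ 0 := by
    simp [Complex.cpow_eq_zero_iff, hzc0]
  have ha0 : a ≠ 0 := by
    rw [ha]
    apply mul_ne_zero (mul_ne_zero (by norm_num) hz38) hzc18
  have hkey : b = -(1/3 : ℂ) * (z / starRingEnd ℂ z) * a := by
    have e1 : z ^ ((3:ℂ)/8) = z * z ^ ((3:ℂ)/8 - 1) := by
      conv_lhs => rw [show (3:ℂ)/8 = 1 + ((3:ℂ)/8 - 1) by ring,
        Complex.cpow_add _ _ hz0, Complex.cpow_one]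
    have e2 : (starRingEnd ℂ z) ^ ((-1:ℂ)/8 - 1) =
        (starRingEnd ℂ z) ^ ((-1:ℂ)/8) * (starRingEnd ℂ z)⁻¹ := by
      rw [show (-1:ℂ)/8 - 1 = (-1:ℂ)/8 + (-1) by ring,
        Complex.cpow_add _ _ hzc0, Complex.cpow_neg_one]
    rw [hb, ha, e1, e2]
    field_simp
  have habs : ‖(-(1 / 3 : ℂ) * (z / starRingEnd ℂ z))‖ = 1 / 3 := by
    rw [norm_mul, norm_div, Complex.norm_conj, div_self (by simpa using hz0), norm_neg]
    norm_num
  refine ⟨hdiff, ?_, ?_, habs⟩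
  · -- determinant
    rw [hfd, stmt15_det_helper]
    set r : ℝ := ‖z‖ with hr
    have hr0 : 0 < r := by simpa [hr] using norm_pos_iff.mpr hz0
    have hAa : ‖a‖ = 3/4 * r ^ ((-5:ℝ)/8) * r ^ ((-1:ℝ)/8) := by
      rw [ha, norm_mul, norm_mul,
        show ((3:ℂ)/8 - 1) = (((-5:ℝ)/8 : ℝ) : ℂ) by norm_num,
        show ((-1:ℂ)/8) = (((-1:ℝ)/8 : ℝ) : ℂ) by norm_num,
        Complex.norm_cpow_real, Complex.norm_cpow_real, Complex.norm_conj]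
      norm_num [hr]
    have hAb : ‖b‖ = 1/4 * r ^ ((3:ℝ)/8) * r ^ ((-9:ℝ)/8) := by
      rw [hb, norm_mul, norm_mul,
        show ((3:ℂ)/8) = (((3:ℝ)/8 : ℝ) : ℂ) by norm_num,
        show ((-1:ℂ)/8 - 1) = (((-9:ℝ)/8 : ℝ) : ℂ) by norm_num,
        Complex.norm_cpow_real, Complex.norm_cpow_real, Complex.norm_conj]
      norm_num [hr]
    rw [hAa, hAb]
    have hsq : ∀ p : ℝ, (r ^ p) ^ 2 = r ^ (p * 2) := fun p => by
      rw [← Real.rpow_natCast (r ^ p) 2, ← Real.rpow_mul hr0.le]; norm_num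
    have hmul : ∀ p q : ℝ, r ^ p * r ^ q = r ^ (p + q) :=
      fun p q => (Real.rpow_add hr0 p q).symm
    have hneg : r ^ ((-3:ℝ)/2) = (r ^ ((3:ℝ)/2))⁻¹ := by
      rw [show ((-3:ℝ)/2) = -((3:ℝ)/2) by ring, Real.rpow_neg hr0.le]
    simp only [mul_pow, hsq]
    rw [mul_assoc ((3/4:ℝ)^2), mul_assoc ((1/4:ℝ)^2), hmul, hmul]
    rw [show ((-5:ℝ)/8*2 + (-1:ℝ)/8*2) = (-3:ℝ)/2 by norm_num,
      show ((3:ℝ)/8*2 + (-9:ℝ)/8*2) = (-3:ℝ)/2 by norm_num, hneg]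
    have hpos : (0:ℝ) < r ^ ((3:ℝ)/2) := Real.rpow_pos_of_pos hr0 _
    field_simp
    ring
  · -- Beltrami coefficient
    rw [hv1, hvI]
    have hII : Complex.I * Complex.I = -1 := Complex.I_mul_I
    have num : (a + b + Complex.I * (a * Complex.I - b * Complex.I)) / 2 = b := by
      field_simp
      linear_combination (a - b) * hII
    have den : (a + b - Complex.I * (a * Complex.I - b * Complex.I)) / 2 = a := by
      field_simp
      linear_combination (b - a) * hII
    rw [num, den, hkey, mul_div_assoc, div_self ha0, mul_one]
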